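/- Let ψ: ℝⁿ → ℝ ∪ {+∞} be a proper convex μ-integrable function (with ψ(0) finite) whose domain dom(ψ) is bounded, where 0 is interior to dom(ψ). For t ∈ ℝ define ψ_t = ψ + t and φ_t = ψ_t*. Then for every t < −ψ(0), φ_t: ℝⁿ → ℝ is a positive convex function with 0 < ∫_{ℝⁿ} φ_t^{-(n+p)} < ∞, and for any given A > 0 there exists t < −ψ(0) with ∫_{ℝⁿ} φ_t(x)^{-(n+p)} dx = A. -/

import Mathlib

open MeasureTheory Filter
open scoped ENNReal RealInnerProductSpace

noncomputable section

abbrev En (n : ℕ) := EuclideanSpace ℝ (Fin n)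

/-- Legendre transform of an `EReal`-valued function: `ψ*(y) = sup_{x ∈ dom ψ} (⟨x,y⟩ - ψ x)`. -/
def legendre {n : ℕ} (ψ : En n → EReal) (y : En n) : EReal :=
  ⨆ x : {x : En n // ψ x < ⊤}, ((⟪x.1, y⟫ : ℝ) : EReal) - ψ x.1

/-- Convexity for `ℝ ∪ {+∞}`-valued functions. -/
def EConvexOn {n : ℕ} (ψ : En n → EReal) : Prop :=
  ∀ x y : En n, ∀ a b : ℝ, 0 ≤ a → 0 ≤ b → a + b = 1 →
    ψ (a • x + b • y) ≤ (a : EReal) * ψ x + (b : EReal) * ψ y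

/-- `t ^ (-s)` with the conventions `0^(-s) = ∞`, `∞^(-s) = 0` (for `s > 0`). -/
def negPow (t : EReal) (s : ℝ) : ℝ≥0∞ :=
  if t = ⊤ then 0 else if t ≤ 0 then ⊤ else ENNReal.ofReal (t.toReal ^ (-s))

/-- `I_p(ψ) = (∫ (ψ*)^{-(n+p)})^{-1/p} ∈ [0,∞]`. -/
def Ip (n : ℕ) (p : ℝ) (ψ : En n → EReal) : ℝ≥0∞ :=
  (∫⁻ x, negPow (legendre ψ x) ((n : ℝ) + p)) ^ (-(1 : ℝ) / p)

section AuxProofs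

open Metric Set

set_option maxHeartbeats 1000000 in
theorem reduction {n : ℕ} (ψ : En n → EReal) (hconv : EConvexOn ψ)
    (hbot : ∀ x, ψ x ≠ ⊥)
    (hbdd : Bornology.IsBounded {x | ψ x < ⊤})
    (h0 : (0 : En n) ∈ interior {x | ψ x < ⊤}) :
    ∃ (L : En n → ℝ) (R r K : ℝ), 0 < R ∧ 0 < r ∧
      (∀ (t : ℝ) (x : En n), legendre (fun z => ψ z + (t : EReal)) x = ((L x - t : ℝ) : EReal)) ∧
      ConvexOn ℝ Set.univ L ∧
      (∀ x y, L x ≤ L y + R * ‖x - y‖) ∧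
      (∀ x, -(ψ 0).toReal ≤ L x) ∧
      (∀ x, r * ‖x‖ - K ≤ L x) ∧
      (∃ x₀, L x₀ = -(ψ 0).toReal) := by
  classical
  set D : Set (En n) := {x | ψ x < ⊤} with hD
  set f : En n → ℝ := fun x => (ψ x).toReal with hf
  have hD0 : (0 : En n) ∈ D := interior_subset h0
  have hψeq : ∀ x ∈ D, ψ x = ((f x : ℝ) : EReal) := by
    intro x hx
    exact (EReal.coe_toReal (ne_of_lt hx) (hbot x)).symm
  -- convexity of D and f
  have hkey : ∀ x ∈ D, ∀ y ∈ D, ∀ a b : ℝ, 0 ≤ a → 0 ≤ b → a + b = 1 →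
      ψ (a • x + b • y) ≤ ((a * f x + b * f y : ℝ) : EReal) := by
    intro x hx y hy a b ha hb hab
    have := hconv x y a b ha hb hab
    rwa [hψeq x hx, hψeq y hy, ← EReal.coe_mul, ← EReal.coe_mul, ← EReal.coe_add] at this
  have hDconv : Convex ℝ D := by
    intro x hx y hy a b ha hb hab
    exact lt_of_le_of_lt (hkey x hx y hy a b ha hb hab) (EReal.coe_lt_top _)
  have hfconv : ConvexOn ℝ D f := by
    refine ⟨hDconv, fun x hx y hy a b ha hb hab => ?_⟩
    have h1 := hkey x hx y hy a b ha hb hab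
    have h2 : a • x + b • y ∈ D := hDconv hx hy ha hb hab
    have := EReal.toReal_le_toReal h1 (hbot _) (EReal.coe_ne_top _)
    rw [EReal.toReal_coe] at this
    simpa [hf] using this
  -- radius R bounding D
  obtain ⟨R₀, hR₀⟩ := hbdd.subset_closedBall 0
  -- small ball inside interior D
  obtain ⟨ε, hε, hball⟩ := Metric.isOpen_iff.1 isOpen_interior 0 h0
  set r : ℝ := min (ε / 2) 1 with hr
  have hrpos : 0 < r := lt_min (by linarith) one_pos
  have hr1 : r ≤ 1 := min_le_right _ _
  have hrball : closedBall (0 : En n) r ⊆ interior D := by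
    refine subset_trans ?_ hball
    intro x hx
    have := mem_closedBall.1 hx
    exact mem_ball.2 (lt_of_le_of_lt this (lt_of_le_of_lt (min_le_left _ _) (by linarith)))
  have hrD : closedBall (0 : En n) r ⊆ D := hrball.trans interior_subset
  set R : ℝ := max R₀ 1 with hR
  have hRpos : (0:ℝ) < R := lt_of_lt_of_le one_pos (le_max_right _ _)
  have hRD : ∀ x ∈ D, ‖x‖ ≤ R := by
    intro x hx
    have := hR₀ hx
    simp only [mem_closedBall, dist_zero_right] at this
    exact this.trans (le_max_left _ _)
  -- continuity of f on interior D, bound K on closed ball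
  have hfc : ContinuousOn f (interior D) := hfconv.continuousOn_interior
  obtain ⟨K, hK⟩ := (isCompact_closedBall (0:En n) r).exists_bound_of_continuousOn
    (hfc.mono hrball)
  have hK0 : 0 ≤ K := le_trans (norm_nonneg _) (hK 0 (mem_closedBall_self hrpos.le))
  have hKf : ∀ x ∈ closedBall (0:En n) r, f x ≤ K := by
    intro x hx
    have := hK x hx
    rw [Real.norm_eq_abs] at this
    exact (le_abs_self _).trans this
  -- lower bound M for f on D
  set B : ℝ := |f 0| + K with hB
  have hBpos : 0 ≤ B := by positivity
  set M : ℝ := -(B * (r + R) / r) with hM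
  have hMf : ∀ x ∈ D, M ≤ f x := by
    intro x' hx'
    rcases eq_or_ne x' 0 with rfl | hne
    · have h1 : -|f 0| ≤ f 0 := neg_abs_le _
      have h2 : (1:ℝ) ≤ (r + R)/r := by
        rw [le_div_iff₀ hrpos]; linarith
      have h3 : B * 1 ≤ B * ((r+R)/r) := by
        apply mul_le_mul_of_nonneg_left h2 hBpos
      rw [hM, mul_div_assoc]
      linarith
    · set s : ℝ := ‖x'‖ with hs
      have hspos : 0 < s := norm_pos_iff.2 hne
      have hsR : s ≤ R := hRD x' hx'
      set y : En n := -((r/s) • x') with hy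
      have hyD : y ∈ D := by
        apply hrD
        simp only [mem_closedBall, dist_zero_right, hy, norm_neg, norm_smul,
          Real.norm_eq_abs, abs_of_pos (div_pos hrpos hspos)]
        rw [← hs, div_mul_cancel₀ _ hspos.ne']
      set a : ℝ := r / (r + s) with ha
      set b : ℝ := s / (r + s) with hb2
      have hrs : 0 < r + s := by linarith
      have hapos : 0 < a := div_pos hrpos hrs
      have hbpos : 0 ≤ b := le_of_lt (div_pos hspos hrs)
      have hab : a + b = 1 := by rw [ha, hb2]; field_simp
      have hcomb : a • x' + b • y = 0 := by
        rw [hy, smul_neg, smul_smul]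
        have hba : b * (r / s) = a := by
          rw [hb2, ha]; field_simp
        rw [hba]
        exact add_neg_cancel _
      have hcvx := hfconv.2 hx' hyD hapos.le hbpos hab
      rw [hcomb] at hcvx
      -- f 0 ≤ a * f x' + b * f y
      have hfyK : f y ≤ K := hKf y (by
        simp only [mem_closedBall, dist_zero_right, hy, norm_neg, norm_smul,
          Real.norm_eq_abs, abs_of_pos (div_pos hrpos hspos)]
        rw [← hs, div_mul_cancel₀ _ hspos.ne'])
      have hb1 : b ≤ 1 := by
        rw [hb2, div_le_one hrs]; linarith
      have h1 : a * f x' ≥ -B := by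
        have : b * f y ≤ K := by
          calc b * f y ≤ b * K := mul_le_mul_of_nonneg_left hfyK hbpos
          _ ≤ 1 * K := mul_le_mul_of_nonneg_right hb1 hK0
          _ = K := one_mul K
        have h2 : -|f 0| ≤ f 0 := neg_abs_le _
        simp only [smul_eq_mul] at hcvx
        linarith
      have haR : r / (r + R) ≤ a := by
        rw [ha]
        apply div_le_div_of_nonneg_left hrpos.le hrs
        linarith
      rcases le_or_gt 0 (f x') with h | h
      · have : M ≤ 0 := by
          rw [hM]; simp only [neg_nonpos]; positivity
        linarith
      · have haa : a * f x' ≤ (r/(r+R)) * f x' := by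
          apply mul_le_mul_of_nonpos_right haR h.le
        have h3 : (r/(r+R)) * f x' ≥ -B := le_trans h1 haa
        have hrR : (0:ℝ) < r + R := by linarith
        have h4 : -B * (r+R) ≤ r * f x' := by
          rw [ge_iff_le, div_mul_eq_mul_div, le_div_iff₀ hrR] at h3
          linarith
        show -(B*(r+R)/r) ≤ f x'
        rw [← neg_div, div_le_iff₀ hrpos]
        nlinarith
  -- the real conjugate function L
  set c₀ : ℝ := -f 0 with hc₀
  set g : En n → En n → ℝ := fun x' x => ⟪x', x⟫ - f x' with hg
  have hgb : ∀ x : En n, ∀ x' ∈ D, g x' x ≤ R * ‖x‖ - M := by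
    intro x x' hx'
    have h1 : ⟪x', x⟫ ≤ ‖x'‖ * ‖x‖ := real_inner_le_norm _ _
    have h2 : ‖x'‖ * ‖x‖ ≤ R * ‖x‖ := mul_le_mul_of_nonneg_right (hRD x' hx') (norm_nonneg _)
    have h3 := hMf x' hx'
    simp only [hg]; linarith
  have hbdd2 : ∀ x, BddAbove ((fun x' => g x' x) '' D) := by
    intro x
    exact ⟨R * ‖x‖ - M, by rintro v ⟨x', hx', rfl⟩; exact hgb x x' hx'⟩
  have hne2 : ∀ x, ((fun x' => g x' x) '' D).Nonempty := fun x => ⟨g 0 x, 0, hD0, rfl⟩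
  set L : En n → ℝ := fun x => sSup ((fun x' => g x' x) '' D) with hL
  have hLub : ∀ x : En n, ∀ x' ∈ D, g x' x ≤ L x := by
    intro x x' hx'
    exact le_csSup (hbdd2 x) ⟨x', hx', rfl⟩
  have hLle : ∀ (x : En n) (c : ℝ), (∀ x' ∈ D, g x' x ≤ c) → L x ≤ c := by
    intro x c hc
    exact csSup_le (hne2 x) (by rintro v ⟨x', hx', rfl⟩; exact hc x' hx')
  have hg0 : ∀ x, g 0 x = c₀ := by
    intro x; simp [hg, hc₀]
  have hLge0 : ∀ x, c₀ ≤ L x := by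
    intro x
    have := hLub x 0 hD0
    rwa [hg0] at this
  -- identification of the legendre transform
  have hleg : ∀ (t : ℝ) (x : En n),
      legendre (fun z => ψ z + (t : EReal)) x = ((L x - t : ℝ) : EReal) := by
    intro t x
    have hdom : ∀ z : En n, (ψ z + (t:EReal) < ⊤) ↔ z ∈ D := by
      intro z
      constructor
      · intro h
        by_contra hz
        have hzt : ψ z = ⊤ := by
          simp only [hD, mem_setOf_eq, not_lt, top_le_iff] at hz; exact hz
        rw [hzt] at h
        simp only [EReal.top_add_coe, lt_self_iff_false] at h
      · intro hz
        rw [hψeq z hz, ← EReal.coe_add]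
        exact EReal.coe_lt_top _
    have hterm : ∀ z ∈ D,
        ((⟪z, x⟫ : ℝ) : EReal) - (ψ z + (t:EReal)) = ((g z x - t : ℝ) : EReal) := by
      intro z hz
      rw [hψeq z hz, ← EReal.coe_add, ← EReal.coe_sub]
      norm_cast
      simp only [hg]; ring
    apply le_antisymm
    · apply iSup_le
      rintro ⟨z, hz⟩
      have hzD : z ∈ D := (hdom z).1 hz
      rw [hterm z hzD]
      exact_mod_cast (by linarith [hLub x z hzD] : g z x - t ≤ L x - t)
    · set S := legendre (fun z => ψ z + (t:EReal)) x with hS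
      have hSge : ∀ z ∈ D, ((g z x - t : ℝ) : EReal) ≤ S := by
        intro z hz
        rw [← hterm z hz, hS]
        exact le_iSup (fun w : {w : En n // ψ w + (t:EReal) < ⊤} =>
          ((⟪w.1, x⟫ : ℝ) : EReal) - (ψ w.1 + (t:EReal))) ⟨z, (hdom z).2 hz⟩
      have hSle : S ≤ ((R * ‖x‖ - M - t : ℝ) : EReal) := by
        rw [hS]
        apply iSup_le
        rintro ⟨z, hz⟩
        have hzD : z ∈ D := (hdom z).1 hz
        rw [hterm z hzD]
        exact_mod_cast (by linarith [hgb x z hzD] : g z x - t ≤ R * ‖x‖ - M - t)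
      have hSbot : S ≠ ⊥ := by
        intro h
        have h2 := hSge 0 hD0
        rw [h, le_bot_iff] at h2
        exact (EReal.coe_ne_bot _) h2
      have hStop : S ≠ ⊤ := by
        intro h
        rw [h, top_le_iff] at hSle
        exact (EReal.coe_ne_top _) hSle
      rw [← EReal.coe_toReal hStop hSbot, EReal.coe_le_coe_iff]
      have hLS : L x ≤ S.toReal + t := by
        apply hLle
        intro z hz
        have h2 := hSge z hz
        rw [← EReal.coe_toReal hStop hSbot, EReal.coe_le_coe_iff] at h2
        linarith
      linarith
  -- Lipschitz bound
  have hLlip : ∀ x y, L x ≤ L y + R * ‖x - y‖ := by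
    intro x y
    apply hLle
    intro x' hx'
    have h1 : g x' x = g x' y + ⟪x', x - y⟫ := by
      simp only [hg, inner_sub_right]; ring
    have h2 : ⟪x', x - y⟫ ≤ R * ‖x - y‖ :=
      le_trans (real_inner_le_norm _ _)
        (mul_le_mul_of_nonneg_right (hRD x' hx') (norm_nonneg _))
    have h3 := hLub y x' hx'
    linarith
  -- convexity
  have hLconv : ConvexOn ℝ Set.univ L := by
    refine ⟨convex_univ, fun x _ y _ a b ha hb hab => ?_⟩
    simp only [smul_eq_mul]
    apply hLle
    intro x' hx'
    have h1 : g x' (a • x + b • y) = a * g x' x + b * g x' y := by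
      simp only [hg, inner_add_right, real_inner_smul_right]
      linear_combination (f x') * hab
    rw [h1]
    have h2 := mul_le_mul_of_nonneg_left (hLub x x' hx') ha
    have h3 := mul_le_mul_of_nonneg_left (hLub y x' hx') hb
    linarith
  -- lower growth bound
  have hLlbK : ∀ x, r * ‖x‖ - K ≤ L x := by
    intro x
    rcases eq_or_ne x 0 with rfl | hx
    · have h2 := hLge0 0
      have hf0K : f 0 ≤ K := hKf 0 (mem_closedBall_self hrpos.le)
      simp only [norm_zero, mul_zero, zero_sub, hc₀] at h2 ⊢
      linarith
    · set x'' : En n := (r / ‖x‖) • x with hx''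
      have hnx : 0 < ‖x‖ := norm_pos_iff.2 hx
      have hmem : x'' ∈ closedBall (0:En n) r := by
        simp only [mem_closedBall, dist_zero_right, hx'', norm_smul, Real.norm_eq_abs,
          abs_of_pos (div_pos hrpos hnx)]
        rw [div_mul_cancel₀ _ hnx.ne']
      have hD'' : x'' ∈ D := hrD hmem
      have hval : g x'' x = r * ‖x‖ - f x'' := by
        simp only [hg, hx'', real_inner_smul_left, real_inner_self_eq_norm_sq]
        have hnrm : r / ‖x‖ * ‖x‖ ^ 2 = r * ‖x‖ := by
          field_simp
        rw [hnrm]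
      have h2 := hLub x x'' hD''
      have h3 := hKf x'' hmem
      rw [hval] at h2; linarith
  -- minimizer via supporting hyperplane
  set U : Set (En n × ℝ) := {q | q.1 ∈ ball (0:En n) r ∧ f q.1 < q.2} with hU
  have hUconv : Convex ℝ U := by
    rintro ⟨x, u⟩ ⟨hx, hxu⟩ ⟨y, v⟩ ⟨hy, hyv⟩ a b ha hb hab
    refine ⟨(convex_ball 0 r) hx hy ha hb hab, ?_⟩
    show f (a • x + b • y) < a * u + b * v
    have hcx := hfconv.2 (hrD (ball_subset_closedBall hx))
      (hrD (ball_subset_closedBall hy)) ha hb hab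
    simp only [smul_eq_mul] at hcx
    rcases eq_or_lt_of_le ha with rfl | ha'
    · have hb1 : b = 1 := by linarith
      subst hb1
      simp only [zero_mul] at hcx ⊢
      nlinarith
    · have h1 : a * f x < a * u := by exact (mul_lt_mul_iff_right₀ ha').2 hxu
      have h2 : b * f y ≤ b * v := mul_le_mul_of_nonneg_left hyv.le hb
      linarith
  have hUopen : IsOpen U := by
    have hV : IsOpen ((ball (0:En n) r) ×ˢ (univ : Set ℝ)) := isOpen_ball.prod isOpen_univ
    have hmaps : Set.MapsTo Prod.fst ((ball (0:En n) r) ×ˢ (univ : Set ℝ)) (interior D) := by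
      rintro ⟨x, u⟩ ⟨hx, _⟩
      exact hrball (ball_subset_closedBall hx)
    have hFc : ContinuousOn (fun q : En n × ℝ => f q.1 - q.2)
        ((ball (0:En n) r) ×ˢ (univ : Set ℝ)) := by
      exact (hfc.comp continuous_fst.continuousOn hmaps).sub continuous_snd.continuousOn
    have hUeq : U = ((ball (0:En n) r) ×ˢ (univ : Set ℝ)) ∩
        ((fun q : En n × ℝ => f q.1 - q.2) ⁻¹' (Iio 0)) := by
      ext ⟨x, u⟩
      simp only [hU, mem_setOf_eq, mem_inter_iff, mem_prod, mem_univ, and_true,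
        mem_preimage, mem_Iio, sub_neg]
    rw [hUeq]
    exact hFc.isOpen_inter_preimage hV isOpen_Iio
  have hnotmem : ((0:En n), f 0) ∉ U := by
    simp [hU]
  obtain ⟨l, hl⟩ := geometric_hahn_banach_open_point hUconv hUopen hnotmem
  set β : ℝ := l (0, 1) with hβ
  set lin : En n →L[ℝ] ℝ := l.comp (ContinuousLinearMap.inl ℝ (En n) ℝ) with hlin
  have hlval : ∀ (x : En n) (u : ℝ), l (x, u) = lin x + u * β := by
    intro x u
    have h1 : (x, u) = ((x, 0) : En n × ℝ) + (0, u) := by simp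
    rw [h1, map_add]
    congr 1
    have h2 : ((0:En n), u) = u • ((0:En n), (1:ℝ)) := by simp
    rw [h2, l.map_smul, smul_eq_mul, hβ]
  have hβneg : β < 0 := by
    have h1 : ((0:En n), f 0 + 1) ∈ U := ⟨mem_ball_self hrpos, by show f 0 < f 0 + 1; linarith⟩
    have h2 := hl _ h1
    rw [hlval, hlval] at h2
    linarith
  have hβpos : 0 < -β := by linarith
  have hsub : ∀ x ∈ ball (0:En n) r, lin x + f x * β ≤ f 0 * β := by
    intro x hx
    have key : ∀ δ : ℝ, 0 < δ → lin x + f x * β < f 0 * β + δ := by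
      intro δ hδ
      have hmem2 : (x, f x + δ/(-β)) ∈ U := ⟨hx, by
        show f x < f x + δ/(-β)
        have : 0 < δ/(-β) := div_pos hδ hβpos
        linarith⟩
      have h2 := hl _ hmem2
      rw [hlval, hlval] at h2
      have hlin0 : lin (0 : En n) = 0 := map_zero lin
      have hb' : (δ / (-β)) * β = -δ := by
        rw [div_mul_eq_mul_div, div_neg, mul_div_assoc, div_self hβneg.ne, mul_one]
      have hexp : (f x + δ/(-β)) * β = f x * β + (δ/(-β)) * β := add_mul _ _ _
      linarith
    by_contra hcon
    push_neg at hcon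
    have := key ((lin x + f x * β - f 0 * β)/2) (by linarith)
    linarith
  set w : En n := (InnerProductSpace.toDual ℝ (En n)).symm lin with hw
  have hwval : ∀ x : En n, ⟪w, x⟫ = lin x := by
    intro x
    rw [hw]
    exact InnerProductSpace.toDual_symm_apply
  set x₀ : En n := (-β)⁻¹ • w with hx₀
  have hsub2 : ∀ x ∈ ball (0:En n) r, f 0 + ⟪x₀, x⟫ ≤ f x := by
    intro x hx
    have h1 := hsub x hx
    have h2 : ⟪x₀, x⟫ = (-β)⁻¹ * lin x := by
      rw [hx₀, real_inner_smul_left, hwval]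
    rw [h2]
    have h3 : lin x ≤ (-β) * (f x - f 0) := by nlinarith
    have h4 : (-β)⁻¹ * lin x ≤ f x - f 0 := by
      rw [inv_mul_eq_div, div_le_iff₀ hβpos]
      linarith [h3]
    linarith
  have hsubD : ∀ x' ∈ D, ⟪x₀, x'⟫ ≤ f x' - f 0 := by
    intro x' hx'
    set s' : ℝ := r / (2 * (‖x'‖ + 1)) with hs'
    have hd : (0:ℝ) < ‖x'‖ + 1 := by positivity
    have hs'pos : 0 < s' := by positivity
    have hs'1 : s' ≤ 1/2 := by
      rw [hs', div_le_div_iff₀ (by positivity) (by norm_num)]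
      nlinarith [norm_nonneg x', hr1]
    have hmem3 : s' • x' ∈ ball (0:En n) r := by
      simp only [mem_ball, dist_zero_right, norm_smul, Real.norm_eq_abs, abs_of_pos hs'pos]
      rw [hs', div_mul_eq_mul_div, div_lt_iff₀ (by positivity)]
      nlinarith [norm_nonneg x', hrpos]
    have h1 := hsub2 _ hmem3
    rw [real_inner_smul_right] at h1
    have hcs : f (s' • x') ≤ s' * f x' + (1 - s') * f 0 := by
      have h5 := hfconv.2 hx' hD0 hs'pos.le (by linarith : (0:ℝ) ≤ 1 - s') (by ring)
      simp only [smul_zero, add_zero, smul_eq_mul] at h5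
      exact h5
    have h6 : s' * ⟪x₀, x'⟫ ≤ s' * (f x' - f 0) := by linarith
    exact (mul_le_mul_iff_right₀ hs'pos).1 h6
  have hmin : L x₀ = c₀ := by
    apply le_antisymm
    · apply hLle
      intro x' hx'
      have h1 := hsubD x' hx'
      have h2 : g x' x₀ = ⟪x₀, x'⟫ - f x' := by
        simp only [hg, real_inner_comm]
      rw [h2, hc₀]
      linarith
    · exact hLge0 x₀
  refine ⟨L, R, r, K, hRpos, hrpos, hleg, hLconv, hLlip, ?_, hLlbK, ⟨x₀, ?_⟩⟩
  · exact hLge0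
  · exact hmin


set_option maxHeartbeats 1000000 in
theorem analytic {n : ℕ} (p : ℝ) (hp : 0 < p) (R r K c₀ : ℝ) (hR : 0 < R) (hr : 0 < r)
    (L : En n → ℝ) (hLlip : ∀ x y, L x ≤ L y + R * ‖x - y‖)
    (hlb1 : ∀ x, c₀ ≤ L x) (hlb2 : ∀ x, r * ‖x‖ - K ≤ L x)
    (x₀ : En n) (hx₀ : L x₀ = c₀) :
    (∀ t : ℝ, t < c₀ →
      0 < (∫⁻ x, ENNReal.ofReal ((L x - t) ^ (-((n:ℝ) + p)))) ∧
      (∫⁻ x, ENNReal.ofReal ((L x - t) ^ (-((n:ℝ) + p)))) < ⊤) ∧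
    ∀ A : ℝ, 0 < A → ∃ t : ℝ, t < c₀ ∧
      (∫⁻ x, ENNReal.ofReal ((L x - t) ^ (-((n:ℝ) + p)))) = ENNReal.ofReal A := by
  have hn0 : (0:ℝ) ≤ (n:ℝ) := Nat.cast_nonneg n
  set s : ℝ := (n:ℝ) + p with hs
  have hns : (n:ℝ) < s := by rw [hs]; linarith
  have hs0 : 0 < s := by linarith
  have hfinrank : ((Module.finrank ℝ (En n) : ℕ) : ℝ) = (n:ℝ) := by
    rw [finrank_euclideanSpace_fin]
  -- continuity of L
  have hLcont : Continuous L := by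
    have hlip' : LipschitzWith (Real.toNNReal R) L := by
      apply LipschitzWith.of_dist_le_mul
      intro x y
      rw [Real.dist_eq, Real.coe_toNNReal _ hR.le, dist_eq_norm, abs_sub_le_iff]
      constructor
      · linarith [hLlip x y]
      · have h := hLlip y x
        rw [norm_sub_rev y x] at h
        linarith
    exact hlip'.continuous
  -- uniform lower bound ε (1+‖x‖)
  have hlow : ∀ t : ℝ, t < c₀ → ∃ ε : ℝ, 0 < ε ∧ ∀ x, ε * (1 + ‖x‖) ≤ L x - t := by
    intro t ht
    set δ : ℝ := c₀ - t with hδ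
    have hδpos : 0 < δ := by rw [hδ]; linarith
    set C : ℝ := |K| + |t| with hC
    have hC0 : 0 ≤ C := by positivity
    set X : ℝ := 1 + 2 * C / r with hX
    have hX1 : (1:ℝ) ≤ X := by
      rw [hX]
      have : 0 ≤ 2 * C / r := by positivity
      linarith
    refine ⟨min (r/2) (δ/(1+X)), lt_min (by linarith) (by positivity), fun x => ?_⟩
    rcases le_or_gt ‖x‖ X with hcase | hcase
    · have h1 : min (r/2) (δ/(1+X)) * (1 + ‖x‖) ≤ (δ/(1+X)) * (1+X) := by
        apply mul_le_mul (min_le_right _ _) (by linarith) (by positivity) (by positivity)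
      have h2 : (δ/(1+X)) * (1+X) = δ := div_mul_cancel₀ _ (by linarith)
      have h3 := hlb1 x
      rw [h2] at h1
      linarith
    · have h1 : min (r/2) (δ/(1+X)) * (1 + ‖x‖) ≤ (r/2) * (1+‖x‖) := by
        apply mul_le_mul_of_nonneg_right (min_le_left _ _) (by positivity)
      have hXeq : r/2 * X = r/2 + C := by rw [hX]; field_simp
      have h2 : (r/2) * (1+‖x‖) ≤ r * ‖x‖ - C := by
        have h3 : r/2 * X ≤ r/2 * ‖x‖ := by
          apply mul_le_mul_of_nonneg_left hcase.le (by linarith)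
        nlinarith
      have h4 := hlb2 x
      have h5 : K ≤ |K| := le_abs_self K
      have h6 : t ≤ |t| := le_abs_self t
      rw [hC] at h2
      linarith
  -- continuity of the integrand
  have hcont : ∀ t q : ℝ, t < c₀ → Continuous (fun x : En n => (L x - t) ^ (-q)) := by
    intro t q ht
    apply Continuous.rpow_const (hLcont.sub continuous_const)
    intro x
    left
    have := hlb1 x
    exact ne_of_gt (by linarith : (0:ℝ) < L x - t)
  -- integrability
  have hIntegrable : ∀ t q : ℝ, (n:ℝ) < q → t < c₀ →
      Integrable (fun x : En n => (L x - t) ^ (-q)) := by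
    intro t q hq ht
    obtain ⟨ε, hε, hεle⟩ := hlow t ht
    have hbase : Integrable (fun x : En n => (1 + ‖x‖) ^ (-q)) := by
      apply integrable_one_add_norm
      rw [hfinrank]; exact hq
    refine (hbase.const_mul (ε ^ (-q))).mono'
      ((hcont t q ht).aestronglyMeasurable) ?_
    filter_upwards with x
    have hpos : (0:ℝ) < L x - t := lt_of_lt_of_le (by positivity) (hεle x)
    rw [Real.norm_eq_abs, abs_of_nonneg (Real.rpow_nonneg hpos.le _),
      ← Real.mul_rpow hε.le (by positivity)]
    exact Real.rpow_le_rpow_of_nonpos (by positivity) (hεle x) (by linarith)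
  set J : ℝ → ℝ := fun t => ∫ x : En n, (L x - t) ^ (-s) with hJ
  have hJeq : ∀ t : ℝ, t < c₀ → (∫⁻ x, ENNReal.ofReal ((L x - t) ^ (-s))) = ENNReal.ofReal (J t) := by
    intro t ht
    rw [hJ, ofReal_integral_eq_lintegral_ofReal (hIntegrable t s hns ht)
      (Eventually.of_forall fun x => Real.rpow_nonneg (by linarith [hlb1 x]) _)]
  have hJpos : ∀ t : ℝ, t < c₀ → 0 < J t := by
    intro t ht
    rw [hJ]
    apply (integral_pos_iff_support_of_nonneg
      (fun x => Real.rpow_nonneg (by linarith [hlb1 x]) _) (hIntegrable t s hns ht)).2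
    have hsupp : Function.support (fun x : En n => (L x - t) ^ (-s)) = univ := by
      ext x
      simp only [Function.mem_support, mem_univ, iff_true]
      exact ne_of_gt (Real.rpow_pos_of_pos (by linarith [hlb1 x]) _)
    rw [hsupp]
    exact isOpen_univ.measure_pos volume univ_nonempty
  -- continuity of J
  have hJcont : ∀ t : ℝ, t < c₀ → ContinuousAt J t := by
    intro t ht
    set t' : ℝ := (t + c₀)/2 with ht'def
    have htt' : t < t' := by rw [ht'def]; linarith
    have ht'c : t' < c₀ := by rw [ht'def]; linarith
    apply continuousAt_of_dominated (bound := fun x => (L x - t') ^ (-s))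
    · filter_upwards [Iio_mem_nhds ht] with τ hτ
      exact ((hcont τ s hτ).aestronglyMeasurable)
    · filter_upwards [Iio_mem_nhds htt'] with τ hτ
      filter_upwards with x
      have hpos' : (0:ℝ) < L x - t' := by linarith [hlb1 x]
      have hpos : (0:ℝ) < L x - τ := by linarith [hlb1 x, mem_Iio.1 hτ]
      rw [Real.norm_eq_abs, abs_of_nonneg (Real.rpow_nonneg hpos.le _)]
      exact Real.rpow_le_rpow_of_nonpos hpos' (by linarith [mem_Iio.1 hτ]) (by linarith)
    · exact hIntegrable t' s hns ht'c
    · filter_upwards with x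
      have hpos : (0:ℝ) < L x - t := by linarith [hlb1 x]
      exact (Real.continuousAt_rpow_const _ _ (Or.inl (ne_of_gt hpos))).comp
        ((continuous_const.sub continuous_id).continuousAt)
  refine ⟨fun t ht => ⟨?_, ?_⟩, ?_⟩
  · rw [hJeq t ht]
    exact ENNReal.ofReal_pos.2 (hJpos t ht)
  · rw [hJeq t ht]
    exact ENNReal.ofReal_lt_top
  -- surjectivity
  intro A hA
  -- choose t₂ close to c₀ with J t₂ ≥ A
  have hvpos : 0 < (volume (ball (0:En n) 1)).toReal :=
    ENNReal.toReal_pos (measure_ball_pos volume _ one_pos).ne' measure_ball_lt_top.ne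
  set v : ℝ := (volume (ball (0:En n) 1)).toReal with hv
  set c : ℝ := 2 ^ (-s) * v / R ^ (n:ℕ) with hc
  have hcpos : 0 < c := by
    rw [hc]
    have h1 : (0:ℝ) < (2:ℝ) ^ (-s) := Real.rpow_pos_of_pos two_pos _
    positivity
  have hJlb : ∀ δ : ℝ, 0 < δ → J (c₀ - δ) ≥ c * δ ^ (-p) := by
    intro δ hδ
    set t : ℝ := c₀ - δ with htdef
    have ht : t < c₀ := by rw [htdef]; linarith
    set ρ : ℝ := δ / R with hρ
    have hρpos : 0 < ρ := by positivity
    have hball : ∀ x ∈ ball x₀ ρ, (2*δ) ^ (-s) ≤ (L x - t) ^ (-s) := by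
      intro x hx
      have h1 : ‖x - x₀‖ < ρ := by
        rw [← dist_eq_norm]; exact mem_ball.1 hx
      have h2 : L x ≤ c₀ + δ := by
        have := hLlip x x₀
        rw [hx₀] at this
        have h3 : R * ‖x - x₀‖ ≤ R * ρ := mul_le_mul_of_nonneg_left h1.le hR.le
        have h4 : R * ρ = δ := by rw [hρ]; field_simp
        linarith
      have hpos : (0:ℝ) < L x - t := by linarith [hlb1 x]
      apply Real.rpow_le_rpow_of_nonpos hpos (by linarith) (by linarith)
    have hint := hIntegrable t s hns ht
    have hnn : ∀ x : En n, 0 ≤ (L x - t) ^ (-s) :=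
      fun x => Real.rpow_nonneg (by linarith [hlb1 x]) _
    have h5 : (2*δ) ^ (-s) * (volume (ball x₀ ρ)).toReal ≤ ∫ x in ball x₀ ρ, (L x - t) ^ (-s) := by
      apply setIntegral_ge_of_const_le_real measurableSet_ball measure_ball_lt_top.ne hball
      exact hint.integrableOn
    have h6 : (∫ x in ball x₀ ρ, (L x - t) ^ (-s)) ≤ J t :=
      setIntegral_le_integral hint (Eventually.of_forall hnn)
    have h7 : (volume (ball x₀ ρ)).toReal = ρ ^ (n:ℕ) * v := by
      rw [Measure.addHaar_ball_of_pos volume x₀ hρpos, ENNReal.toReal_mul,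
        ENNReal.toReal_ofReal (by positivity), hv]
      congr 2
      exact finrank_euclideanSpace_fin
    have hsplit : δ ^ (-s) * δ ^ (n:ℕ) = δ ^ (-p) := by
      rw [← Real.rpow_natCast δ n, ← Real.rpow_add hδ]
      congr 1
      rw [hs]; push_cast; ring
    have hRn : (R:ℝ) ^ (n:ℕ) ≠ 0 := pow_ne_zero _ hR.ne'
    have h8 : (2*δ) ^ (-s) * (ρ ^ (n:ℕ) * v) = c * δ ^ (-p) := by
      rw [hρ, Real.mul_rpow two_pos.le hδ.le, div_pow, hc, ← hsplit]
      field_simp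
    rw [h7] at h5
    rw [h8] at h5
    exact le_trans h5 h6
  -- pick δ
  set δ₀ : ℝ := (c/(A+c)) ^ (1/p) with hδ₀
  have hδ₀pos : 0 < δ₀ := Real.rpow_pos_of_pos (by positivity) _
  set δ : ℝ := min 1 δ₀ with hδdef
  have hδpos : 0 < δ := lt_min one_pos hδ₀pos
  have hJt₂ : A ≤ J (c₀ - δ) := by
    have h1 : δ ^ p ≤ c/(A+c) := by
      have h2 : δ ^ p ≤ δ₀ ^ p := Real.rpow_le_rpow hδpos.le (min_le_right _ _) hp.le
      have h3 : δ₀ ^ p = c/(A+c) := by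
        rw [hδ₀, ← Real.rpow_mul (by positivity), one_div, inv_mul_cancel₀ hp.ne', Real.rpow_one]
      linarith
    have h4 : A ≤ c * δ ^ (-p) := by
      rw [Real.rpow_neg hδpos.le, mul_comm, inv_mul_eq_div, le_div_iff₀ (Real.rpow_pos_of_pos hδpos _)]
      have h5 : A * δ ^ p ≤ A * (c/(A+c)) := mul_le_mul_of_nonneg_left h1 hA.le
      have h6 : A * (c/(A+c)) ≤ c := by
        rw [mul_div_assoc', div_le_iff₀ (by positivity : (0:ℝ) < A + c)]
        nlinarith [sq_nonneg c, mul_pos hA hcpos]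
      linarith
    linarith [hJlb δ hδpos]
  set t₂ : ℝ := c₀ - δ with ht₂def
  have ht₂ : t₂ < c₀ := by rw [ht₂def]; linarith
  -- pick t₁ below t₂ with J t₁ ≤ A
  obtain ⟨ε₂, hε₂, hε₂le⟩ := hlow t₂ ht₂
  set q : ℝ := (n:ℝ) + p/2 with hq
  have hqn : (n:ℝ) < q := by rw [hq]; linarith
  set C : ℝ := ∫ x : En n, (ε₂ * (1 + ‖x‖)) ^ (-q) with hCdef
  have hC0 : 0 ≤ C := integral_nonneg fun x => Real.rpow_nonneg (by positivity) _
  have hCint : Integrable (fun x : En n => (ε₂ * (1 + ‖x‖)) ^ (-q)) := by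
    have hbase : Integrable (fun x : En n => (1 + ‖x‖) ^ (-q)) := by
      apply integrable_one_add_norm
      rw [hfinrank]; exact hqn
    have heq : (fun x : En n => ε₂ ^ (-q) * (1 + ‖x‖) ^ (-q))
        = (fun x : En n => (ε₂ * (1 + ‖x‖)) ^ (-q)) := by
      funext x
      rw [← Real.mul_rpow hε₂.le (by positivity)]
    exact heq ▸ (hbase.const_mul (ε₂ ^ (-q)))
  have hJub : ∀ u : ℝ, 0 < u → J (t₂ - u) ≤ u ^ (-(p/2)) * C := by
    intro u hu
    set t : ℝ := t₂ - u with htdef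
    have ht : t < c₀ := by rw [htdef]; linarith
    have hptw : ∀ x : En n, (L x - t) ^ (-s) ≤ u ^ (-(p/2)) * (ε₂ * (1 + ‖x‖)) ^ (-q) := by
      intro x
      have h1 : ε₂ * (1 + ‖x‖) ≤ L x - t₂ := hε₂le x
      have h2 : (0:ℝ) < ε₂ * (1 + ‖x‖) := by positivity
      have h3 : L x - t = (L x - t₂) + u := by rw [htdef]; ring
      have h4 : (0:ℝ) < L x - t := by rw [h3]; linarith
      have hsplit : (L x - t) ^ (-s) = (L x - t) ^ (-q) * (L x - t) ^ (-(p/2)) := by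
        rw [← Real.rpow_add h4]
        congr 1
        rw [hq, hs]; ring
      rw [hsplit, mul_comm (u ^ (-(p/2)))]
      apply mul_le_mul
      · exact Real.rpow_le_rpow_of_nonpos h2 (by linarith) (by linarith)
      · exact Real.rpow_le_rpow_of_nonpos hu (by linarith) (by linarith)
      · exact Real.rpow_nonneg h4.le _
      · exact Real.rpow_nonneg h2.le _
    have h5 : J t ≤ ∫ x : En n, u ^ (-(p/2)) * (ε₂ * (1 + ‖x‖)) ^ (-q) := by
      apply integral_mono (hIntegrable t s hns ht) (hCint.const_mul _) hptw
    rw [integral_const_mul] at h5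
    rw [htdef] at h5 ⊢
    exact h5
  -- choose u
  set u₀ : ℝ := (C/A + 1) ^ (2/p) with hu₀
  have hu₀pos : 0 < u₀ := Real.rpow_pos_of_pos (by positivity) _
  set u : ℝ := max 1 u₀ with hudef
  have hupos : 0 < u := lt_of_lt_of_le one_pos (le_max_left _ _)
  have hJt₁ : J (t₂ - u) ≤ A := by
    have h1 : C/A + 1 ≤ u ^ (p/2) := by
      have h2 : u₀ ^ (p/2) ≤ u ^ (p/2) :=
        Real.rpow_le_rpow hu₀pos.le (le_max_right _ _) (by positivity)
      have h3 : u₀ ^ (p/2) = C/A + 1 := by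
        rw [hu₀, ← Real.rpow_mul (by positivity)]
        have hexp : (2/p) * (p/2) = 1 := by field_simp
        rw [hexp, Real.rpow_one]
      linarith
    have h4 : u ^ (-(p/2)) * C ≤ A := by
      rw [Real.rpow_neg hupos.le, inv_mul_eq_div, div_le_iff₀ (Real.rpow_pos_of_pos hupos _)]
      have h5 : A * (C/A + 1) ≤ A * u ^ (p/2) := mul_le_mul_of_nonneg_left h1 hA.le
      have h6 : A * (C/A + 1) = C + A := by field_simp
      nlinarith
    linarith [hJub u hupos]
  set t₁ : ℝ := t₂ - u with ht₁def
  have ht₁₂ : t₁ < t₂ := by rw [ht₁def]; linarith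
  have hconton : ContinuousOn J (Icc t₁ t₂) := by
    intro τ hτ
    exact (hJcont τ (lt_of_le_of_lt hτ.2 ht₂)).continuousWithinAt
  have hIVT := intermediate_value_Icc ht₁₂.le hconton
  have hmem : A ∈ Icc (J t₁) (J t₂) := ⟨hJt₁, hJt₂⟩
  obtain ⟨t, htmem, hJt⟩ := hIVT hmem
  refine ⟨t, lt_of_le_of_lt htmem.2 ht₂, ?_⟩
  rw [hJeq t (lt_of_le_of_lt htmem.2 ht₂), hJt]

end AuxProofs

theorem statement13 {n : ℕ} (p : ℝ) (hp : 0 < p) (μ : Measure (En n))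
    (ψ : En n → EReal) (hconv : EConvexOn ψ) (hlsc : LowerSemicontinuous ψ)
    (hbot : ∀ x, ψ x ≠ ⊥) (hne : ∃ x, ψ x ≠ ⊤)
    (hbdd : Bornology.IsBounded {x | ψ x < ⊤})
    (h0 : (0 : En n) ∈ interior {x | ψ x < ⊤})
    (hint : Integrable (fun x => (ψ x).toReal) μ) (hμae : ∀ᵐ x ∂μ, ψ x ≠ ⊤) :
    (∀ t : ℝ, t < -(ψ 0).toReal →
      (∀ x, 0 < legendre (fun z => ψ z + (t : EReal)) x ∧
        legendre (fun z => ψ z + (t : EReal)) x < ⊤) ∧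
      ConvexOn ℝ Set.univ (fun x => (legendre (fun z => ψ z + (t : EReal)) x).toReal) ∧
      0 < (∫⁻ x, negPow (legendre (fun z => ψ z + (t : EReal)) x) ((n : ℝ) + p)) ∧
      (∫⁻ x, negPow (legendre (fun z => ψ z + (t : EReal)) x) ((n : ℝ) + p)) < ⊤) ∧
    ∀ A : ℝ, 0 < A → ∃ t : ℝ, t < -(ψ 0).toReal ∧
      (∫⁻ x, negPow (legendre (fun z => ψ z + (t : EReal)) x) ((n : ℝ) + p))
        = ENNReal.ofReal A := by
  obtain ⟨L, R, r, K, hRpos, hrpos, hleg, hLconv, hLlip, hlb1, hlb2, x₀, hx₀⟩ :=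
    reduction ψ hconv hbot hbdd h0
  set c₀ : ℝ := -(ψ 0).toReal with hc₀
  obtain ⟨hbullet, hsurj⟩ := analytic p hp R r K c₀ hRpos hrpos L hLlip hlb1 hlb2 x₀ hx₀
  have hnegPow : ∀ t : ℝ, t < c₀ → ∀ x,
      negPow (legendre (fun z => ψ z + (t:EReal)) x) ((n:ℝ)+p)
        = ENNReal.ofReal ((L x - t) ^ (-((n:ℝ)+p))) := by
    intro t ht x
    rw [hleg t x, negPow]
    have hpos : 0 < L x - t := by linarith [hlb1 x]
    rw [if_neg (EReal.coe_ne_top _), if_neg (by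
      simp only [not_le]
      exact_mod_cast hpos), EReal.toReal_coe]
  constructor
  · intro t ht
    obtain ⟨hpos, hfin⟩ := hbullet t ht
    have hposx : ∀ x, 0 < L x - t := fun x => by linarith [hlb1 x]
    refine ⟨fun x => ⟨?_, ?_⟩, ?_, ?_, ?_⟩
    · rw [hleg t x]
      exact_mod_cast hposx x
    · rw [hleg t x]
      exact EReal.coe_lt_top _
    · have hfun : (fun x => (legendre (fun z => ψ z + (t:EReal)) x).toReal)
          = fun x => L x - t := by
        funext x
        rw [hleg t x, EReal.toReal_coe]
      rw [hfun]
      refine ⟨convex_univ, fun x hx y hy a b ha hb hab => ?_⟩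
      have := hLconv.2 hx hy ha hb hab
      have h2 : a*t + b*t = t := by rw [← add_mul, hab, one_mul]
      simp only [smul_eq_mul] at this ⊢
      linarith
    · rw [lintegral_congr (fun x => hnegPow t ht x)]
      exact hpos
    · rw [lintegral_congr (fun x => hnegPow t ht x)]
      exact hfin
  · intro A hA
    obtain ⟨t, ht, hval⟩ := hsurj A hA
    refine ⟨t, ht, ?_⟩
    rw [lintegral_congr (fun x => hnegPow t ht x), hval]
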